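/- Let T be a finite tree (a finite connected acyclic graph), let r ≥ 1 be an integer, and let D_s, D_t be distance-r dominating sets of T with |D_s| = |D_t|. Then there exists a TJ-sequence in T from D_s to D_t. -/
import Mathlib

/-- `D` is a distance-`r` dominating set of `G`. -/
def IsDrDS {V : Type*} (G : SimpleGraph V) (r : ℕ) (D : Set V) : Prop :=
  ∀ v : V, ∃ u ∈ D, G.Reachable u v ∧ G.dist u v ≤ r

/-- A TJ-sequence of length `q` of distance-`r` dominating sets of `G`. -/
def IsTJSeq {V : Type*} (G : SimpleGraph V) (r q : ℕ)
    (Dseq : Fin (q + 1) → Finset V) : Prop :=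
  (∀ i, IsDrDS G r ↑(Dseq i)) ∧
  ∀ i : Fin q, ∃ x ∈ Dseq i.castSucc, ∃ y, y ∉ Dseq i.castSucc ∧
    (↑(Dseq i.succ) : Set V) = (↑(Dseq i.castSucc) \ {x}) ∪ {y}

open SimpleGraph Finset Relation

namespace TJaux

set_option linter.unusedSectionVars false

variable {V : Type*} [DecidableEq V]

/-- In a tree, every path realizes the distance. -/
lemma path_len {T : SimpleGraph V} (hc : T.Connected) (ha : T.IsAcyclic)
    {u v : V} (p : T.Walk u v) (hp : p.IsPath) : p.length = T.dist u v := by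
  obtain ⟨q, hq, hql⟩ := (hc.preconnected u v).exists_path_of_dist
  have heq : (⟨p, hp⟩ : T.Path u v) = ⟨q, hq⟩ := ha.path_unique _ _
  have hpq : p = q := congrArg Subtype.val heq
  rw [hpq, hql]

lemma split_dist {T : SimpleGraph V} (hc : T.Connected) (ha : T.IsAcyclic)
    {u v a : V} (p : T.Walk u v) (hp : p.IsPath) (hmem : a ∈ p.support) :
    T.dist u a + T.dist a v = T.dist u v := by
  have h1 := hp.takeUntil hmem
  have h2 := hp.dropUntil hmem
  have hlen := congrArg Walk.length (p.take_spec hmem)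
  rw [Walk.length_append] at hlen
  rw [← path_len hc ha _ h1, ← path_len hc ha _ h2, ← path_len hc ha p hp]
  exact hlen

lemma exists_mid {T : SimpleGraph V} (hc : T.Connected) (ha : T.IsAcyclic) :
    ∀ {u v : V} (p : T.Walk u v), p.IsPath → ∀ n, n ≤ p.length →
    ∃ a ∈ p.support, T.dist u a + n = p.length ∧ T.dist a v = n := by
  intro u v p
  induction p with
  | @nil w =>
    intro _ n hn
    simp only [Walk.length_nil, Nat.le_zero] at hn
    subst hn
    exact ⟨w, by simp, by simp, by simp [SimpleGraph.dist_self]⟩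
  | @cons u b v h p ih =>
    intro hp n hn
    rw [Walk.length_cons] at hn
    have hp' : p.IsPath := hp.of_cons
    have husup : u ∉ p.support := (Walk.cons_isPath_iff h p).mp hp |>.2
    rcases Nat.lt_or_ge n (p.length + 1) with hlt | hge
    · have hn' : n ≤ p.length := Nat.lt_succ_iff.mp hlt
      obtain ⟨a, hmem, hda, hdav⟩ := ih hp' n hn'
      refine ⟨a, by simp [hmem], ?_, hdav⟩
      have hq := hp'.takeUntil hmem
      have hu2 : u ∉ (p.takeUntil a hmem).support :=
        fun hh => husup (Walk.support_takeUntil_subset _ hmem hh)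
      have hcp : (Walk.cons h (p.takeUntil a hmem)).IsPath := hq.cons hu2
      have hlen1 : (Walk.cons h (p.takeUntil a hmem)).length = T.dist u a :=
        path_len hc ha _ hcp
      rw [Walk.length_cons] at hlen1
      have hlen2 : (p.takeUntil a hmem).length = T.dist b a := path_len hc ha _ hq
      rw [Walk.length_cons]
      omega
    · have hne : n = p.length + 1 := le_antisymm hn hge
      have hdv : (Walk.cons h p).length = T.dist u v := path_len hc ha _ hp
      rw [Walk.length_cons] at hdv
      refine ⟨u, by simp, ?_, ?_⟩
      · rw [Walk.length_cons]; simp [SimpleGraph.dist_self]; omega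
      · omega

/-- Key geometric lemma: the "anchor" `a` above `v` at distance `min r (depth v)`. -/
lemma key {T : SimpleGraph V} (hc : T.Connected) (ha : T.IsAcyclic) (r : ℕ) (ρ v : V) :
    ∃ a, T.dist a v ≤ r ∧ ∀ w, T.dist ρ w ≤ T.dist ρ v → T.dist w v ≤ r + r →
      T.dist w a ≤ r := by
  by_cases hd : T.dist ρ v ≤ r
  · refine ⟨ρ, hd, fun w hw _ => ?_⟩
    rw [SimpleGraph.dist_comm]; omega
  push_neg at hd
  obtain ⟨p, hp, hpl⟩ := (hc.preconnected ρ v).exists_path_of_dist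
  have hr : r ≤ p.length := by omega
  obtain ⟨a, hmem, hda, hdav⟩ := exists_mid hc ha p hp r hr
  refine ⟨a, by omega, fun w hw hwv => ?_⟩
  obtain ⟨Q, hQ, hQl⟩ := (hc.preconnected w ρ).exists_path_of_dist
  obtain ⟨P2, hP2, hP2l⟩ := (hc.preconnected w v).exists_path_of_dist
  set W := Q.reverse.append P2 with hW
  have hbp : (⟨p, hp⟩ : T.Path ρ v) = ⟨W.bypass, W.bypass_isPath⟩ := ha.path_unique _ _
  have hpw : p = W.bypass := congrArg Subtype.val hbp
  have hmem' : a ∈ W.support := W.support_bypass_subset (hpw ▸ hmem)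
  rw [Walk.mem_support_append_iff] at hmem'
  rcases hmem' with hq | hpv
  · rw [Walk.support_reverse, List.mem_reverse] at hq
    have hsp := split_dist hc ha Q hQ hq
    have h2 : T.dist a ρ = T.dist ρ a := SimpleGraph.dist_comm
    have h3 : T.dist w ρ = T.dist ρ w := SimpleGraph.dist_comm
    omega
  · have hsp := split_dist hc ha P2 hP2 hpv
    omega


/-- `S` distance-`r` dominates every vertex. -/
def Dom (T : SimpleGraph V) (r : ℕ) (S : Finset V) : Prop :=
  ∀ v : V, ∃ u ∈ S, T.dist u v ≤ r

/-- One legal token jump between dominating sets. -/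
def Step (T : SimpleGraph V) (r : ℕ) (S S' : Finset V) : Prop :=
  Dom T r S ∧ Dom T r S' ∧ ∃ x ∈ S, ∃ y, y ∉ S ∧ S' = insert y (S.erase x)

lemma step_symm {T : SimpleGraph V} {r : ℕ} {S S' : Finset V} (h : Step T r S S') :
    Step T r S' S := by
  obtain ⟨h1, h2, x, hx, y, hy, heq⟩ := h
  refine ⟨h2, h1, y, by simp [heq], x, ?_, ?_⟩
  · rw [heq]
    simp only [mem_insert, mem_erase, not_or]
    exact ⟨fun hh => hy (hh ▸ hx), fun hh => hh.1 rfl⟩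
  · rw [heq, Finset.erase_insert (fun hh => hy (Finset.mem_of_mem_erase hh)),
      Finset.insert_erase hx]

lemma step_card {T : SimpleGraph V} {r : ℕ} {S S' : Finset V} (h : Step T r S S') :
    S'.card = S.card := by
  obtain ⟨_, _, x, hx, y, hy, heq⟩ := h
  rw [heq, Finset.card_insert_of_notMem (fun hh => hy (Finset.mem_of_mem_erase hh)),
    Finset.card_erase_add_one hx]

lemma rtg_card {T : SimpleGraph V} {r : ℕ} {S S' : Finset V}
    (h : ReflTransGen (Step T r) S S') : S'.card = S.card := by
  induction h with
  | refl => rfl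
  | tail _ hstep ih => rw [step_card hstep, ih]

lemma rtg_symm {T : SimpleGraph V} {r : ℕ} {S S' : Finset V}
    (h : ReflTransGen (Step T r) S S') : ReflTransGen (Step T r) S' S := by
  induction h with
  | refl => exact .refl
  | tail _ hstep ih => exact .head (step_symm hstep) ih

/-- Canonicalization: there is a fixed set `A` (covering `U`) such that any dominating set can
be reconfigured to contain `B ∪ A`, provided `B` covers the complement of `U` and is far
from `U`. -/
lemma core {T : SimpleGraph V} (r : ℕ) (hc : T.Connected) (ha : T.IsAcyclic) (ρ : V) :
    ∀ (n : ℕ) (U : Finset V), U.card ≤ n → ∃ A : Finset V,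
      (∀ z ∈ U, ∃ a ∈ A, T.dist a z ≤ r) ∧
      ∀ B S : Finset V, (∀ w : V, w ∉ U → ∃ b ∈ B, T.dist b w ≤ r) →
        (∀ b ∈ B, ∀ z ∈ U, r < T.dist b z) → B ⊆ S → Dom T r S →
        ∃ S', ReflTransGen (Step T r) S S' ∧ B ∪ A ⊆ S' ∧ Dom T r S' := by
  intro n
  induction n with
  | zero =>
    intro U hU
    rw [Nat.le_zero, Finset.card_eq_zero] at hU
    subst hU
    exact ⟨∅, by simp, fun B S _ _ hBS hS => ⟨S, .refl, by simpa using hBS, hS⟩⟩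
  | succ n ih =>
    intro U hU
    rcases U.eq_empty_or_nonempty with rfl | hUne
    · exact ⟨∅, by simp, fun B S _ _ hBS hS => ⟨S, .refl, by simpa using hBS, hS⟩⟩
    obtain ⟨v, hv, hvmax⟩ := U.exists_max_image (fun z => T.dist ρ z) hUne
    obtain ⟨a, hav, hkey⟩ := key hc ha r ρ v
    set U' := U.filter (fun z => r < T.dist a z) with hU'
    have hU'sub : U' ⊆ U := Finset.filter_subset _ _
    have hvU' : v ∉ U' := by
      rw [hU', Finset.mem_filter]
      push_neg
      intro _
      omega
    have hcard : U'.card ≤ n := by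
      have h1 : U'.card < U.card := Finset.card_lt_card ⟨hU'sub, fun hsub => hvU' (hsub hv)⟩
      omega
    obtain ⟨A', hA'cov, hA'⟩ := ih U' hcard
    refine ⟨insert a A', ?_, ?_⟩
    · intro z hz
      by_cases hz' : z ∈ U'
      · obtain ⟨a', ha', hd⟩ := hA'cov z hz'
        exact ⟨a', mem_insert_of_mem ha', hd⟩
      · refine ⟨a, mem_insert_self _ _, ?_⟩
        rw [hU', Finset.mem_filter] at hz'
        push_neg at hz'
        exact hz' hz
    · intro B S hcov hfar hBS hS
      obtain ⟨s, hsS, hsv⟩ := hS v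
      have hsB : s ∉ B := fun hsB => absurd (hfar s hsB v hv) (by omega)
      have hdom1 : ∀ w, T.dist s w ≤ r → w ∈ U → T.dist a w ≤ r := by
        intro w hsw hwU
        rw [SimpleGraph.dist_comm]
        refine hkey w (hvmax w hwU) ?_
        have htri : T.dist w v ≤ T.dist w s + T.dist s v := hc.dist_triangle
        have hcm : T.dist w s = T.dist s w := SimpleGraph.dist_comm
        omega
      have hcov' : ∀ (S₁ : Finset V), ∀ w : V, w ∉ U' → ∃ b ∈ insert a B, T.dist b w ≤ r := by
        intro _ w hw
        by_cases hwU : w ∈ U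
        · refine ⟨a, mem_insert_self _ _, ?_⟩
          rw [hU', Finset.mem_filter] at hw
          push_neg at hw
          exact hw hwU
        · obtain ⟨b, hbB, hbd⟩ := hcov w hwU
          exact ⟨b, mem_insert_of_mem hbB, hbd⟩
      have hfar' : ∀ b ∈ insert a B, ∀ z ∈ U', r < T.dist b z := by
        intro b hb z hz
        rcases Finset.mem_insert.mp hb with rfl | hbB
        · rw [hU', Finset.mem_filter] at hz
          exact hz.2
        · exact hfar b hbB z (hU'sub hz)
      by_cases haS : a ∈ S
      · obtain ⟨S', h1, h2, h3⟩ := hA' (insert a B) S (hcov' S) hfar'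
          (Finset.insert_subset haS hBS) hS
        refine ⟨S', h1, ?_, h3⟩
        rw [Finset.union_insert]
        rw [Finset.insert_union] at h2
        exact h2
      · set S₁ := insert a (S.erase s) with hS₁
        have hDomS₁ : Dom T r S₁ := by
          intro w
          obtain ⟨u, huS, hud⟩ := hS w
          by_cases hus : u = s
          · by_cases hwU : w ∈ U
            · exact ⟨a, mem_insert_self _ _, hdom1 w (hus ▸ hud) hwU⟩
            · obtain ⟨b, hbB, hbd⟩ := hcov w hwU
              have hbs : b ≠ s := fun h => hsB (h ▸ hbB)
              exact ⟨b, mem_insert_of_mem (Finset.mem_erase.mpr ⟨hbs, hBS hbB⟩), hbd⟩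
          · exact ⟨u, mem_insert_of_mem (Finset.mem_erase.mpr ⟨hus, huS⟩), hud⟩
        have hstep : Step T r S S₁ := ⟨hS, hDomS₁, s, hsS, a, haS, rfl⟩
        have hBS₁ : insert a B ⊆ S₁ := by
          refine Finset.insert_subset (mem_insert_self _ _) ?_
          intro b hbB
          have hbs : b ≠ s := fun h => hsB (h ▸ hbB)
          exact mem_insert_of_mem (Finset.mem_erase.mpr ⟨hbs, hBS hbB⟩)
        obtain ⟨S', h1, h2, h3⟩ := hA' (insert a B) S₁ (hcov' S₁) hfar' hBS₁ hDomS₁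
        refine ⟨S', .head hstep h1, ?_, h3⟩
        rw [Finset.union_insert]
        rw [Finset.insert_union] at h2
        exact h2

/-- Shuffling redundant tokens above a fixed dominating core. -/
lemma fill {T : SimpleGraph V} (r : ℕ) (A : Finset V)
    (hA : ∀ v : V, ∃ a ∈ A, T.dist a v ≤ r) :
    ∀ (n : ℕ) (S S'' : Finset V), (S \ S'').card ≤ n → A ⊆ S → A ⊆ S'' →
      S.card = S''.card → ReflTransGen (Step T r) S S'' := by
  intro n
  induction n with
  | zero =>
    intro S S'' hcard hAS hAS'' hSc
    rw [Nat.le_zero, Finset.card_eq_zero, Finset.sdiff_eq_empty_iff_subset] at hcard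
    rw [Finset.eq_of_subset_of_card_le hcard (le_of_eq hSc.symm)]
  | succ n ih =>
    intro S S'' hcard hAS hAS'' hSc
    by_cases heq : S = S''
    · rw [heq]
    have h1 : (S \ S'').Nonempty := by
      rw [Finset.nonempty_iff_ne_empty]
      intro hh
      rw [Finset.sdiff_eq_empty_iff_subset] at hh
      exact heq (Finset.eq_of_subset_of_card_le hh (le_of_eq hSc.symm))
    obtain ⟨x, hx⟩ := h1
    have hxx := Finset.mem_sdiff.mp hx
    have h2 : (S'' \ S).Nonempty := by
      rw [Finset.nonempty_iff_ne_empty]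
      intro hh
      rw [Finset.sdiff_eq_empty_iff_subset] at hh
      exact heq (Finset.eq_of_subset_of_card_le hh (le_of_eq hSc)).symm
    obtain ⟨y, hy⟩ := h2
    have hyy := Finset.mem_sdiff.mp hy
    have hxA : x ∉ A := fun h => hxx.2 (hAS'' h)
    set S₁ := insert y (S.erase x) with hS₁
    have hAS₁ : A ⊆ S₁ := by
      intro b hbA
      exact mem_insert_of_mem (Finset.mem_erase.mpr ⟨fun h => hxA (h ▸ hbA), hAS hbA⟩)
    have hDomS : Dom T r S := fun w => (hA w).imp (fun a hh => ⟨hAS hh.1, hh.2⟩)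
    have hDomS₁ : Dom T r S₁ := fun w => (hA w).imp (fun a hh => ⟨hAS₁ hh.1, hh.2⟩)
    have hstep : Step T r S S₁ := ⟨hDomS, hDomS₁, x, hxx.1, y, hyy.2, rfl⟩
    have hcc : (S₁ \ S'').card ≤ n := by
      have heq2 : S₁ \ S'' = (S \ S'').erase x := by
        ext z
        simp only [hS₁, Finset.mem_sdiff, Finset.mem_insert, Finset.mem_erase]
        constructor
        · rintro ⟨rfl | ⟨hz1, hz2⟩, hz3⟩
          · exact absurd hyy.1 hz3
          · exact ⟨hz1, hz2, hz3⟩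
        · rintro ⟨hz1, hz2, hz3⟩
          exact ⟨Or.inr ⟨hz1, hz2⟩, hz3⟩
      rw [heq2]
      have := Finset.card_erase_add_one hx
      omega
    have hc2 : S₁.card = S''.card := by
      rw [hS₁, Finset.card_insert_of_notMem (fun hh => hyy.2 (Finset.mem_of_mem_erase hh)),
        Finset.card_erase_add_one hxx.1]
      exact hSc
    exact .head hstep (ih S₁ S'' hcc hAS₁ hAS'' hc2)


lemma toSeq {T : SimpleGraph V} {r : ℕ} :
    ∀ {S S'' : Finset V}, ReflTransGen (Step T r) S S'' → Dom T r S'' →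
    ∃ (q : ℕ) (f : Fin (q + 1) → Finset V), (∀ i, Dom T r (f i)) ∧
      (∀ i : Fin q, Step T r (f i.castSucc) (f i.succ)) ∧ f 0 = S ∧ f (Fin.last q) = S'' := by
  intro S S'' h hDom
  induction h using ReflTransGen.head_induction_on with
  | refl =>
    exact ⟨0, fun _ => S'', fun _ => hDom, fun i => i.elim0, rfl, rfl⟩
  | @head a c hstep htail ih =>
    obtain ⟨q, f, hdomf, hstepf, hf0, hflast⟩ := ih
    refine ⟨q + 1, Fin.cases a f, ?_, ?_, ?_, ?_⟩
    · intro i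
      induction i using Fin.cases with
      | zero => simpa using hstep.1
      | succ j => simpa using hdomf j
    · intro i
      induction i using Fin.cases with
      | zero =>
        simp only [Fin.castSucc_zero, Fin.cases_zero, Fin.succ_zero_eq_one]
        have h1 : (1 : Fin (q + 2)) = Fin.succ 0 := rfl
        rw [h1, Fin.cases_succ, hf0]
        exact hstep
      | succ j =>
        show Step T r (Fin.cases a f j.succ.castSucc) (Fin.cases a f j.succ.succ)
        rw [← Fin.succ_castSucc, Fin.cases_succ, Fin.cases_succ]
        exact hstepf j
    · simp
    · show Fin.cases a f (Fin.last (q + 1)) = S''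
      rw [← Fin.succ_last, Fin.cases_succ]
      exact hflast

end TJaux

theorem stmt14 {V : Type*} [Fintype V] (T : SimpleGraph V) (htree : T.IsTree)
    (r : ℕ) (hr : 1 ≤ r)
    (Ds Dt : Finset V) (hDs : IsDrDS T r ↑Ds) (hDt : IsDrDS T r ↑Dt)
    (hcard : Ds.card = Dt.card) :
    ∃ (q : ℕ) (Dseq : Fin (q + 1) → Finset V),
      IsTJSeq T r q Dseq ∧ Dseq 0 = Ds ∧ Dseq (Fin.last q) = Dt := by
  classical
  have hc : T.Connected := htree.isConnected
  have ha : T.IsAcyclic := htree.IsAcyclic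
  obtain ⟨ρ⟩ : Nonempty V := hc.nonempty
  have hDomS : TJaux.Dom T r Ds := by
    intro v
    obtain ⟨u, hu, _, hd⟩ := hDs v
    exact ⟨u, hu, hd⟩
  have hDomT : TJaux.Dom T r Dt := by
    intro v
    obtain ⟨u, hu, _, hd⟩ := hDt v
    exact ⟨u, hu, hd⟩
  obtain ⟨A, hAcov, hAmain⟩ := TJaux.core r hc ha ρ (Finset.univ : Finset V).card
    Finset.univ le_rfl
  have hAdom : ∀ v : V, ∃ a ∈ A, T.dist a v ≤ r := fun v => hAcov v (Finset.mem_univ v)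
  obtain ⟨Sa, hSa1, hSa2, _⟩ := hAmain ∅ Ds
    (fun w hw => absurd (Finset.mem_univ w) hw) (by simp) (Finset.empty_subset _) hDomS
  obtain ⟨Sb, hSb1, hSb2, _⟩ := hAmain ∅ Dt
    (fun w hw => absurd (Finset.mem_univ w) hw) (by simp) (Finset.empty_subset _) hDomT
  rw [Finset.empty_union] at hSa2 hSb2
  have hcards : Sa.card = Sb.card := by
    rw [TJaux.rtg_card hSa1, TJaux.rtg_card hSb1, hcard]
  have hfill : ReflTransGen (TJaux.Step T r) Sa Sb :=
    TJaux.fill r A hAdom (Sa \ Sb).card Sa Sb le_rfl hSa2 hSb2 hcards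
  have htot : ReflTransGen (TJaux.Step T r) Ds Dt :=
    (hSa1.trans hfill).trans (TJaux.rtg_symm hSb1)
  obtain ⟨q, f, hdomf, hstepf, hf0, hflast⟩ := TJaux.toSeq htot hDomT
  refine ⟨q, f, ⟨?_, ?_⟩, hf0, hflast⟩
  · intro i v
    obtain ⟨u, hu, hd⟩ := hdomf i v
    exact ⟨u, hu, hc.preconnected u v, hd⟩
  · intro i
    obtain ⟨_, _, x, hx, y, hy, heq⟩ := hstepf i
    refine ⟨x, hx, y, hy, ?_⟩
    rw [heq, Finset.coe_insert, Finset.coe_erase, Set.union_singleton]
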